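/- Existence of rational KKT points for quadratic programs over the box: Let p : ℝⁿ → ℝ be a polynomial of degree at most 2 with rational coefficients. Then there exists a KKT point x ∈ [0,1]ⁿ of the minimization of p over [0,1]ⁿ all of whose coordinates are rational. -/

import Mathlib

open MvPolynomial Finsupp

lemma weight_le_one (n : ℕ) (m : Fin n →₀ ℕ) (h : (m.sum fun _ e => e) ≤ 1) :
    m = 0 ∨ ∃ j, m = Finsupp.single j 1 := by
  rcases eq_or_ne m 0 with h0 | h0
  · exact Or.inl h0
  · right
    obtain ⟨j, hj⟩ := Finsupp.ne_iff.mp h0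
    simp only [Finsupp.coe_zero, Pi.zero_apply] at hj
    have hjs : j ∈ m.support := Finsupp.mem_support_iff.mpr hj
    refine ⟨j, ?_⟩
    ext k
    rcases eq_or_ne k j with rfl | hk
    · have h1 : m k ≤ m.sum fun _ e => e :=
        Finset.single_le_sum (fun _ _ => Nat.zero_le _) hjs
      simp only [Finsupp.single_eq_same]
      omega
    · simp only [Finsupp.single_eq_of_ne' (Ne.symm hk)]
      by_contra hmk
      have hks : k ∈ m.support := Finsupp.mem_support_iff.mpr hmk
      have hsub : ({j, k} : Finset (Fin n)) ⊆ m.support := by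
        intro a ha
        simp only [Finset.mem_insert, Finset.mem_singleton] at ha
        rcases ha with rfl | rfl <;> assumption
      have h2 : ∑ a ∈ ({j, k} : Finset (Fin n)), m a ≤ m.sum fun _ e => e :=
        Finset.sum_le_sum_of_subset hsub
      rw [Finset.sum_pair (Ne.symm hk)] at h2
      omega

lemma coeff_pderiv' (n : ℕ) (i : Fin n) (f : MvPolynomial (Fin n) ℝ) (m : Fin n →₀ ℕ) :
    coeff m (pderiv i f) = ((m i + 1 : ℕ) : ℝ) * coeff (m + Finsupp.single i 1) f := by
  induction f using MvPolynomial.induction_on' with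
  | add p q hp hq => simp [hp, hq, mul_add, coeff_add]
  | monomial s a =>
    rw [pderiv_monomial]
    classical
    rw [coeff_monomial, coeff_monomial]
    by_cases hsi : s i = 0
    · have h1 : (s - Finsupp.single i 1 = m) ∨ True := Or.inr trivial
      have h2 : ¬ (s = m + Finsupp.single i 1) := by
        intro h
        have := DFunLike.congr_fun h i
        simp [hsi] at this
      rw [if_neg h2]
      simp [hsi]
    · have key : (s - Finsupp.single i 1 = m) ↔ (s = m + Finsupp.single i 1) := by
        constructor
        · intro h
          ext k
          have := DFunLike.congr_fun h k
          simp only [Finsupp.tsub_apply, Finsupp.add_apply] at this ⊢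
          rcases eq_or_ne k i with rfl | hk
          · simp only [Finsupp.single_eq_same] at this ⊢; omega
          · simp only [Finsupp.single_eq_of_ne' (Ne.symm hk)] at this ⊢; omega
        · intro h
          ext k
          have := DFunLike.congr_fun h k
          simp only [Finsupp.tsub_apply, Finsupp.add_apply] at this ⊢
          rcases eq_or_ne k i with rfl | hk
          · simp only [Finsupp.single_eq_same] at this ⊢; omega
          · simp only [Finsupp.single_eq_of_ne' (Ne.symm hk)] at this ⊢; omega
      by_cases h : s = m + Finsupp.single i 1
      · rw [if_pos (key.mpr h), if_pos h]
        have hmi : s i = m i + 1 := by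
          have := DFunLike.congr_fun h i
          simpa using this
        rw [hmi]
        ring
      · rw [if_neg (fun hh => h (key.mp hh)), if_neg h, mul_zero]

lemma totalDegree_pderiv_le (n : ℕ) (i : Fin n) (f : MvPolynomial (Fin n) ℝ)
    (h : f.totalDegree ≤ 2) : (pderiv i f).totalDegree ≤ 1 := by
  rw [MvPolynomial.totalDegree]
  apply Finset.sup_le
  intro m hm
  rw [MvPolynomial.mem_support_iff, coeff_pderiv'] at hm
  have h2 : coeff (m + Finsupp.single i 1) f ≠ 0 := by
    intro h0; rw [h0, mul_zero] at hm; exact hm rfl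
  have h3 := MvPolynomial.le_totalDegree (MvPolynomial.mem_support_iff.mpr h2)
  have h4 : ((m + Finsupp.single i 1).sum fun _ e => e)
      = (m.sum fun _ e => e) + 1 := by
    rw [Finsupp.sum_add_index' (fun _ => rfl) (fun _ _ _ => rfl)]
    rw [Finsupp.sum_single_index rfl]
  omega

lemma eq_affine_of_totalDegree_le_one (n : ℕ) (q : MvPolynomial (Fin n) ℝ)
    (h : q.totalDegree ≤ 1) :
    q = C (coeff 0 q) + ∑ j, C (coeff (Finsupp.single j 1) q) * X j := by
  ext m
  rw [coeff_add, coeff_C]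
  rw [MvPolynomial.coeff_sum]
  classical
  have hX : ∀ j : Fin n, coeff m (C (coeff (Finsupp.single j 1) q) * X j)
      = if Finsupp.single j 1 = m then coeff (Finsupp.single j 1) q else 0 := by
    intro j
    rw [coeff_C_mul, MvPolynomial.coeff_X']
    split <;> simp
  simp only [hX]
  by_cases hm : (m.sum fun _ e => e) ≤ 1
  · rcases weight_le_one n m hm with rfl | ⟨j, rfl⟩
    · rw [if_pos rfl]
      have : ∀ j : Fin n, ¬ (Finsupp.single j 1 = (0 : Fin n →₀ ℕ)) := by
        intro j h0
        have := DFunLike.congr_fun h0 j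
        simp at this
      rw [Finset.sum_eq_zero (fun j _ => if_neg (this j)), add_zero]
    · have hne : (0 : Fin n →₀ ℕ) ≠ Finsupp.single j 1 := by
        intro h0
        have := DFunLike.congr_fun h0 j
        simp at this
      rw [if_neg hne]
      rw [Finset.sum_eq_single j]
      · rw [if_pos rfl, zero_add]
      · intro b _ hb
        rw [if_neg]
        intro h0
        have := DFunLike.congr_fun h0 b
        rw [Finsupp.single_eq_same, Finsupp.single_eq_of_ne' (Ne.symm hb)] at this
        exact one_ne_zero this
      · intro h0; exact absurd (Finset.mem_univ j) h0
  · push_neg at hm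
    have h0 : coeff m q = 0 :=
      MvPolynomial.coeff_eq_zero_of_totalDegree_lt (lt_of_le_of_lt h hm)
    rw [h0]
    have hm0 : ¬ ((0 : Fin n →₀ ℕ) = m) := by
      rintro rfl; simp at hm
    rw [if_neg hm0, zero_add]
    refine (Finset.sum_eq_zero ?_).symm
    intro j _
    rw [if_neg]
    rintro rfl
    rw [Finsupp.sum_single_index rfl] at hm
    omega

lemma eval_affine (n : ℕ) (q : MvPolynomial (Fin n) ℝ) (h : q.totalDegree ≤ 1) (y : Fin n → ℝ) :
    eval y q = coeff 0 q + ∑ j, coeff (Finsupp.single j 1) q * y j := by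
  conv_lhs => rw [eq_affine_of_totalDegree_le_one n q h]
  simp

lemma hasDerivAt_eval_update (n : ℕ) (x : Fin n → ℝ) (i : Fin n)
    (p : MvPolynomial (Fin n) ℝ) (t : ℝ) :
    HasDerivAt (fun s => eval (Function.update x i s) p)
      (eval (Function.update x i t) (pderiv i p)) t := by
  induction p using MvPolynomial.induction_on with
  | C a =>
    simp only [MvPolynomial.eval_C, pderiv_C, map_zero]
    exact hasDerivAt_const t a
  | add p q hp hq =>
    simp only [MvPolynomial.eval_add, map_add]
    exact hp.add hq
  | mul_X p j hp =>
    by_cases hij : j = i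
    · subst hij
      have key := hp.mul (hasDerivAt_id t)
      simp only [MvPolynomial.eval_mul, MvPolynomial.eval_X, Function.update_self, id_eq]
        at key ⊢
      rw [pderiv_mul, MvPolynomial.eval_add, MvPolynomial.eval_mul, MvPolynomial.eval_mul,
        pderiv_X_self, map_one, MvPolynomial.eval_X, Function.update_self]
      exact key
    · have key := hp.mul_const (x j)
      have hfun : (fun s => eval (Function.update x i s) (p * X j))
          = fun s => eval (Function.update x i s) p * x j := by
        funext s
        rw [MvPolynomial.eval_mul, MvPolynomial.eval_X, Function.update_of_ne hij]
      rw [hfun, pderiv_mul, MvPolynomial.eval_add, MvPolynomial.eval_mul, MvPolynomial.eval_mul,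
        pderiv_X_of_ne hij, map_zero, mul_zero, add_zero, MvPolynomial.eval_X,
        Function.update_of_ne hij]
      exact key

lemma deriv_sign_of_min (f : ℝ → ℝ) (f' a : ℝ) (hf : HasDerivAt f f' a)
    (ha : a ∈ Set.Icc (0:ℝ) 1) (hmin : ∀ t ∈ Set.Icc (0:ℝ) 1, f a ≤ f t) :
    (0 < a → f' ≤ 0) ∧ (a < 1 → 0 ≤ f') := by
  constructor
  · intro ha0
    have hder := (hf.hasDerivWithinAt (s := Set.Iio a))
    have htend : Filter.Tendsto (slope f a) (nhdsWithin a (Set.Iio a)) (nhds f') := by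
      have := hasDerivWithinAt_iff_tendsto_slope.mp hder
      rwa [Set.diff_singleton_eq_self (by simp : a ∉ Set.Iio a)] at this
    refine le_of_tendsto htend ?_
    have h1 : Set.Ioi (0:ℝ) ∈ nhdsWithin a (Set.Iio a) :=
      nhdsWithin_le_nhds (Ioi_mem_nhds ha0)
    filter_upwards [h1, self_mem_nhdsWithin] with t ht0 hta
    rw [slope_def_field]
    apply div_nonpos_of_nonneg_of_nonpos
    · have : f a ≤ f t := hmin t ⟨le_of_lt ht0, le_of_lt (lt_of_lt_of_le hta ha.2)⟩
      linarith
    · simp only [Set.mem_Iio] at hta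
      linarith
  · intro ha1
    have hder := (hf.hasDerivWithinAt (s := Set.Ioi a))
    have htend : Filter.Tendsto (slope f a) (nhdsWithin a (Set.Ioi a)) (nhds f') := by
      have := hasDerivWithinAt_iff_tendsto_slope.mp hder
      rwa [Set.diff_singleton_eq_self (by simp : a ∉ Set.Ioi a)] at this
    refine ge_of_tendsto htend ?_
    have h1 : Set.Iio (1:ℝ) ∈ nhdsWithin a (Set.Ioi a) :=
      nhdsWithin_le_nhds (Iio_mem_nhds ha1)
    filter_upwards [h1, self_mem_nhdsWithin] with t ht1 hta
    rw [slope_def_field]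
    apply div_nonneg
    · simp only [Set.mem_Ioi] at hta
      have : f a ≤ f t := hmin t ⟨le_trans ha.1 (le_of_lt hta), le_of_lt ht1⟩
      linarith
    · simp only [Set.mem_Ioi] at hta
      linarith

section Density

variable {ι κ : Type} [Fintype ι] [Fintype κ] [DecidableEq ι]

private noncomputable def ratDot : LinearMap.BilinForm ℚ (ι → ℚ) :=
  LinearMap.mk₂ ℚ (fun x y => ∑ j, x j * y j)
    (fun x x' y => by simp [add_mul, Finset.sum_add_distrib])
    (fun c x y => by simp [Finset.mul_sum, mul_assoc])
    (fun x y y' => by simp [mul_add, Finset.sum_add_distrib])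
    (fun c x y => by simp [Finset.mul_sum]; congr 1; funext j; ring)

@[simp] private lemma ratDot_apply (x y : ι → ℚ) : ratDot x y = ∑ j, x j * y j := rfl

private lemma ratDot_refl : (ratDot (ι := ι)).IsRefl := by
  intro x y h
  simp only [ratDot_apply] at h ⊢
  rw [← h]
  exact Finset.sum_congr rfl fun j _ => mul_comm _ _

private lemma ratDot_self_eq_zero {x : ι → ℚ} (h : ratDot x x = 0) : x = 0 := by
  simp only [ratDot_apply] at h
  funext j
  have := (Finset.sum_eq_zero_iff_of_nonneg (fun j _ => mul_self_nonneg (x j))).mp h j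
    (Finset.mem_univ j)
  have := mul_self_eq_zero.mp this
  simpa using this

lemma dense_rat_solutions (r : κ → ι → ℚ) (u : ι → ℝ)
    (hu : ∀ k, ∑ j, (r k j : ℝ) * u j = 0) (ε : ℝ) (hε : 0 < ε) :
    ∃ q : ι → ℚ, (∀ k, ∑ j, r k j * q j = 0) ∧ ∀ j, |(q j : ℝ) - u j| < ε := by
  classical
  set B := (ratDot (ι := ι)) with hB
  set R : Submodule ℚ (ι → ℚ) := Submodule.span ℚ (Set.range r) with hR
  set K : Submodule ℚ (ι → ℚ) := B.orthogonal R with hKdef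
  -- the subspaces R and K are complementary
  have hrestrict : (B.restrict R).Nondegenerate := by
    constructor <;>
    · intro ⟨x, hx⟩ hzero
      have := hzero ⟨x, hx⟩
      simp only [LinearMap.BilinForm.restrict_apply, LinearMap.domRestrict_apply] at this
      exact Subtype.ext (ratDot_self_eq_zero this)
  have hcompl : IsCompl R K :=
    LinearMap.BilinForm.isCompl_orthogonal_of_restrict_nondegenerate ratDot_refl hrestrict
  have hK_orth : ∀ y ∈ K, ∀ k, ∑ j, r k j * y j = 0 := by
    intro y hy k
    have := (LinearMap.BilinForm.mem_orthogonal_iff.mp hy) (r k)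
      (Submodule.subset_span (Set.mem_range_self k))
    simpa [LinearMap.BilinForm.IsOrtho, hB] using this
  -- move to the real vector space
  set φ : (ι → ℚ) → (ι → ℝ) := fun q j => (q j : ℝ) with hφ
  have hφ_add : ∀ a b, φ (a + b) = φ a + φ b := by
    intro a b; funext j; simp [hφ]
  set VS : Submodule ℝ (ι → ℝ) := Submodule.span ℝ (φ '' (K : Set (ι → ℚ))) with hVS
  set VR : Submodule ℝ (ι → ℝ) := Submodule.span ℝ (φ '' (R : Set (ι → ℚ))) with hVR
  -- VR and VS together span everything
  have hcover : VR ⊔ VS = ⊤ := by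
    rw [eq_top_iff]
    intro w _
    rw [pi_eq_sum_univ w]
    refine Submodule.sum_mem _ fun i _ => Submodule.smul_mem _ _ ?_
    have : (fun j => if i = j then (1:ℝ) else 0) = φ (fun j => if i = j then 1 else 0) := by
      funext j; simp [hφ]; split <;> simp
    rw [this]
    have hmem : (fun j => if i = j then (1:ℚ) else 0) ∈ R ⊔ K := by
      rw [hcompl.sup_eq_top]; trivial
    obtain ⟨a, ha, b, hb, hab⟩ := Submodule.mem_sup.mp hmem
    rw [← hab, hφ_add]
    exact Submodule.add_mem _
      (Submodule.mem_sup_left (Submodule.subset_span ⟨a, ha, rfl⟩))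
      (Submodule.mem_sup_right (Submodule.subset_span ⟨b, hb, rfl⟩))
  -- orthogonality relations over ℝ
  have hO1 : ∀ v ∈ VR, ∑ j, v j * u j = 0 := by
    intro v hv
    induction hv using Submodule.span_induction with
    | mem x hx =>
      obtain ⟨w, hw, rfl⟩ := hx
      induction hw using Submodule.span_induction with
      | mem x hx =>
        obtain ⟨k, rfl⟩ := hx
        exact hu k
      | zero => simp [hφ]
      | add a b _ _ iha ihb =>
        rw [hφ_add]
        simp only [Pi.add_apply, add_mul, Finset.sum_add_distrib]
        rw [iha, ihb, add_zero]
      | smul c x _ ih =>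
        have : φ (c • x) = (c : ℝ) • φ x := by
          funext j; simp [hφ]
        rw [this]
        simp only [Pi.smul_apply, smul_eq_mul, mul_assoc, ← Finset.mul_sum]
        rw [ih, mul_zero]
    | zero => simp
    | add a b _ _ iha ihb =>
      simp only [Pi.add_apply, add_mul, Finset.sum_add_distrib]
      rw [iha, ihb, add_zero]
    | smul c x _ ih =>
      simp only [Pi.smul_apply, smul_eq_mul, mul_assoc, ← Finset.mul_sum]
      rw [ih, mul_zero]
  have hO2 : ∀ v ∈ VR, ∀ s ∈ VS, ∑ j, v j * s j = 0 := by
    intro v hv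
    induction hv using Submodule.span_induction with
    | mem x hx =>
      obtain ⟨w, hw, rfl⟩ := hx
      intro s hs
      induction hs using Submodule.span_induction with
      | mem y hy =>
        obtain ⟨z, hz, rfl⟩ := hy
        have hBwz : B w z = 0 := (LinearMap.BilinForm.mem_orthogonal_iff.mp hz) w hw
        simp only [hB, ratDot_apply] at hBwz
        have : ((∑ j, w j * z j : ℚ) : ℝ) = 0 := by rw [hBwz]; simp
        push_cast at this
        simpa [hφ] using this
      | zero => simp
      | add a b _ _ iha ihb =>
        simp only [Pi.add_apply, mul_add, Finset.sum_add_distrib]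
        rw [iha, ihb, add_zero]
      | smul c y _ ih =>
        simp only [Pi.smul_apply, smul_eq_mul]
        rw [Finset.sum_congr rfl (fun j _ => by ring_nf : ∀ j ∈ Finset.univ,
          φ w j * (c * y j) = c * (φ w j * y j))]
        rw [← Finset.mul_sum, ih, mul_zero]
    | zero => intro s _; simp
    | add a b _ _ iha ihb =>
      intro s hs
      simp only [Pi.add_apply, add_mul, Finset.sum_add_distrib]
      rw [iha s hs, ihb s hs, add_zero]
    | smul c x _ ih =>
      intro s hs
      simp only [Pi.smul_apply, smul_eq_mul, mul_assoc, ← Finset.mul_sum]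
      rw [ih s hs, mul_zero]
  -- decompose u and conclude u ∈ VS
  have huVS : u ∈ VS := by
    have : u ∈ VR ⊔ VS := by rw [hcover]; trivial
    obtain ⟨a, ha, b, hb, hab⟩ := Submodule.mem_sup.mp this
    have haa : ∑ j, a j * a j = 0 := by
      have h1 : ∑ j, a j * u j = 0 := hO1 a ha
      have h2 : ∑ j, a j * b j = 0 := hO2 a ha b hb
      have h3 : ∀ j, a j * u j = a j * a j + a j * b j := by
        intro j
        have : u j = a j + b j := by rw [← hab]; simp
        rw [this]; ring
      rw [Finset.sum_congr rfl (fun j _ => h3 j), Finset.sum_add_distrib, h2, add_zero] at h1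
      exact h1
    have ha0 : a = 0 := by
      funext j
      have := (Finset.sum_eq_zero_iff_of_nonneg (fun j _ => mul_self_nonneg (a j))).mp haa j
        (Finset.mem_univ j)
      simpa using mul_self_eq_zero.mp this
    rw [← hab, ha0, zero_add]
    exact hb
  -- write u as a finite combination of images of elements of K and approximate
  obtain ⟨N, c, g, hsum⟩ := Submodule.mem_span_set'.mp huVS
  have hgK : ∀ i : Fin N, ∃ y ∈ K, φ y = (g i : ι → ℝ) := by
    intro i
    obtain ⟨y, hy, hyy⟩ := (g i).2
    exact ⟨y, hy, hyy⟩
  choose y hyK hyφ using hgK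
  set M : Fin N → ℚ := fun i => ∑ j, |y i j| with hM
  have hM_bound : ∀ i j, |y i j| ≤ M i := by
    intro i j
    exact Finset.single_le_sum (fun j _ => abs_nonneg (y i j)) (Finset.mem_univ j)
  have hδpos : ∀ i : Fin N, (0:ℝ) < ε / (2 * (N + 1) * ((M i : ℝ) + 1)) := by
    intro i
    apply div_pos hε
    have : (0:ℝ) ≤ (M i : ℝ) := by
      rw [hM]; push_cast
      exact Finset.sum_nonneg fun j _ => by positivity
    positivity
  have hd : ∀ i : Fin N, ∃ d : ℚ, |c i - (d:ℝ)| < ε / (2 * (N + 1) * ((M i : ℝ) + 1)) := by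
    intro i
    exact exists_rat_near (c i) (hδpos i)
  choose d hdc using hd
  refine ⟨∑ i, d i • y i, ?_, ?_⟩
  · intro k
    apply hK_orth
    exact Submodule.sum_mem _ fun i _ => Submodule.smul_mem _ _ (hyK i)
  · intro j
    have hqj : (((∑ i, d i • y i) j : ℚ) : ℝ) = ∑ i, (d i : ℝ) * ((y i j : ℚ) : ℝ) := by
      have h0 : (∑ i, d i • y i) j = ∑ i, d i * y i j := by
        rw [Finset.sum_apply]
        exact Finset.sum_congr rfl fun i _ => rfl
      rw [h0]
      push_cast
      ring
    have huj : u j = ∑ i, c i * ((y i j : ℚ) : ℝ) := by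
      rw [← hsum]
      simp only [Finset.sum_apply, Pi.smul_apply, smul_eq_mul]
      refine Finset.sum_congr rfl fun i _ => ?_
      rw [← hyφ i]
    rw [hqj, huj, ← Finset.sum_sub_distrib]
    have hterm : ∀ i : Fin N, |(d i : ℝ) * (y i j : ℝ) - c i * (y i j : ℝ)|
        ≤ ε / (2 * (N + 1)) := by
      intro i
      rw [← sub_mul, abs_mul]
      have h1 : |(d i : ℝ) - c i| ≤ ε / (2 * (N + 1) * ((M i : ℝ) + 1)) := by
        rw [abs_sub_comm]; exact le_of_lt (hdc i)
      have h2 : |(y i j : ℝ)| ≤ (M i : ℝ) := by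
        have := hM_bound i j
        have := (Rat.cast_le (K := ℝ)).mpr this
        rwa [Rat.cast_abs] at this
      have hMnn : (0:ℝ) ≤ (M i : ℝ) := le_trans (abs_nonneg _) h2
      calc |(d i : ℝ) - c i| * |(y i j : ℝ)|
          ≤ (ε / (2 * (N + 1) * ((M i : ℝ) + 1))) * ((M i : ℝ) + 1) := by
            apply mul_le_mul h1 (by linarith) (abs_nonneg _) (le_of_lt (hδpos i))
        _ = ε / (2 * (N + 1)) := by
            field_simp
    calc |∑ i, ((d i : ℝ) * (y i j : ℝ) - c i * (y i j : ℝ))|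
        ≤ ∑ i, |(d i : ℝ) * (y i j : ℝ) - c i * (y i j : ℝ)| := Finset.abs_sum_le_sum_abs _ _
      _ ≤ ∑ _i : Fin N, ε / (2 * (N + 1)) := Finset.sum_le_sum fun i _ => hterm i
      _ = N * (ε / (2 * (N + 1))) := by
          rw [Finset.sum_const, Finset.card_univ, Fintype.card_fin, nsmul_eq_mul]
      _ < ε := by
          have hN : (0:ℝ) < 2 * (N + 1) := by positivity
          have hlt : (N:ℝ) / (2 * (N + 1)) < 1 := by
            rw [div_lt_one hN]
            push_cast
            linarith
          calc (N:ℝ) * (ε / (2 * (N + 1))) = ((N:ℝ) / (2 * (N + 1))) * ε := by ring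
            _ < 1 * ε := mul_lt_mul_of_pos_right hlt hε
            _ = ε := one_mul ε

end Density


section MainHelpers

lemma sum_ite_one_mul {F : Type} [CommRing F] (n : ℕ) (i : Fin n) (g : Fin n → F) :
    ∑ j, (if j = i then (1:F) else 0) * g j = g i := by
  simp [ite_mul, Finset.sum_ite_eq']

lemma cast_ite_one (i j : Fin n) :
    (((if j = i then (1:ℚ) else 0) : ℚ) : ℝ) = (if j = i then (1:ℝ) else 0) := by
  split <;> simp

end MainHelpers

/-- `x` is a KKT point of the minimization of the polynomial `P` over the box `[0,1]ⁿ`. -/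
def IsKKTPt (n : ℕ) (P : MvPolynomial (Fin n) ℝ) (x : Fin n → ℝ) : Prop :=
  (∀ i, x i ∈ Set.Icc (0 : ℝ) 1) ∧
  (∀ i, (0 < x i → eval x (pderiv i P) ≤ 0) ∧ (x i < 1 → 0 ≤ eval x (pderiv i P)))

/-- Existence of rational KKT points for quadratic programs over the box. -/
theorem exists_rational_KKT (n : ℕ) (P : MvPolynomial (Fin n) ℝ)
    (hdeg : P.totalDegree ≤ 2)
    (hrat : ∀ m, ∃ q : ℚ, P.coeff m = (q : ℝ)) :
    ∃ x : Fin n → ℝ, IsKKTPt n P x ∧ ∀ i, ∃ q : ℚ, x i = (q : ℝ) := by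
  classical
  -- minimize over the box
  set Box : Set (Fin n → ℝ) := Set.univ.pi (fun _ => Set.Icc (0:ℝ) 1) with hBox
  have hBoxmem : ∀ z : Fin n → ℝ, z ∈ Box ↔ ∀ i, z i ∈ Set.Icc (0:ℝ) 1 := by
    intro z
    rw [hBox, Set.mem_univ_pi]
  have hcomp : IsCompact Box := isCompact_univ_pi fun _ => isCompact_Icc
  have hne : Box.Nonempty :=
    ⟨fun _ => 0, (hBoxmem _).mpr fun i => by constructor <;> norm_num⟩
  have hcont : Continuous fun z : Fin n → ℝ => eval z P := MvPolynomial.continuous_eval P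
  obtain ⟨x, hxB, hxmin⟩ := hcomp.exists_isMinOn hne hcont.continuousOn
  have hxmem : ∀ i, x i ∈ Set.Icc (0:ℝ) 1 := (hBoxmem x).mp hxB
  set qp : Fin n → MvPolynomial (Fin n) ℝ := fun i => pderiv i P with hqp
  -- x satisfies the KKT conditions
  have hKKT : ∀ i, (0 < x i → eval x (qp i) ≤ 0) ∧ (x i < 1 → 0 ≤ eval x (qp i)) := by
    intro i
    have hder := hasDerivAt_eval_update n x i P (x i)
    rw [Function.update_eq_self] at hder
    refine deriv_sign_of_min _ _ _ hder (hxmem i) ?_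
    intro t ht
    have hmem : Function.update x i t ∈ Box := by
      rw [hBoxmem]
      intro j
      rcases eq_or_ne j i with rfl | hj
      · rwa [Function.update_self]
      · rw [Function.update_of_ne hj]; exact hxmem j
    have := isMinOn_iff.mp hxmin _ hmem
    simpa [Function.update_eq_self] using this
  -- affine description of the gradient with rational coefficients
  have hdeg1 : ∀ i, (qp i).totalDegree ≤ 1 := fun i => totalDegree_pderiv_le n i P hdeg
  have hratq : ∀ (i : Fin n) m, ∃ q : ℚ, coeff m (qp i) = (q : ℝ) := by
    intro i m
    obtain ⟨q, hq⟩ := hrat (m + Finsupp.single i 1)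
    refine ⟨(m i + 1 : ℕ) * q, ?_⟩
    rw [hqp, coeff_pderiv', hq]
    push_cast
    ring
  choose cc hcc using fun i => hratq i 0
  choose vv hvv using fun i j => hratq i (Finsupp.single j 1)
  have heval : ∀ (i : Fin n) (z : Fin n → ℝ),
      eval z (qp i) = (cc i : ℝ) + ∑ j, (vv i j : ℝ) * z j := by
    intro i z
    rw [eval_affine n (qp i) (hdeg1 i) z, hcc i]
    congr 1
    exact Finset.sum_congr rfl fun j _ => by rw [hvv i j]
  -- margins
  set C : Fin n → ℝ := fun i => ∑ j, |(vv i j : ℝ)| with hC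
  have hCnn : ∀ i, 0 ≤ C i := fun i => Finset.sum_nonneg fun j _ => abs_nonneg _
  have hevaldiff : ∀ (i : Fin n) (z : Fin n → ℝ),
      |eval z (qp i) - eval x (qp i)| ≤ ∑ j, |(vv i j : ℝ)| * |z j - x j| := by
    intro i z
    rw [heval i z, heval i x]
    have h1 : (cc i : ℝ) + ∑ j, (vv i j : ℝ) * z j - ((cc i : ℝ) + ∑ j, (vv i j : ℝ) * x j)
        = ∑ j, (vv i j : ℝ) * (z j - x j) := by
      have h2 : ∑ j, (vv i j : ℝ) * (z j - x j)
          = ∑ j, ((vv i j : ℝ) * z j - (vv i j : ℝ) * x j) :=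
        Finset.sum_congr rfl fun j _ => mul_sub _ _ _
      rw [h2, Finset.sum_sub_distrib]
      ring
    rw [h1]
    calc |∑ j, (vv i j : ℝ) * (z j - x j)| ≤ ∑ j, |(vv i j : ℝ) * (z j - x j)| :=
          Finset.abs_sum_le_sum_abs _ _
      _ = ∑ j, |(vv i j : ℝ)| * |z j - x j| :=
          Finset.sum_congr rfl fun j _ => abs_mul _ _
  have hmargin : ∀ i : Fin n, ∃ d : ℝ, 0 < d ∧
      (0 < x i → d ≤ x i) ∧ (x i < 1 → d ≤ 1 - x i) ∧
      (eval x (qp i) ≠ 0 → ∀ z : Fin n → ℝ, (∀ j, |z j - x j| ≤ d) →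
        (0 < eval x (qp i) → 0 < eval z (qp i)) ∧
        (eval x (qp i) < 0 → eval z (qp i) < 0)) := by
    intro i
    set E := eval x (qp i) with hE
    set A : ℝ := if 0 < x i then x i else 1 with hA
    set B : ℝ := if x i < 1 then 1 - x i else 1 with hB2
    set D : ℝ := if E = 0 then 1 else |E| / (2 * (C i + 1)) with hD
    have hApos : 0 < A := by
      rw [hA]; split
      · assumption
      · norm_num
    have hBpos : 0 < B := by
      rw [hB2]; split
      · linarith
      · norm_num
    have hDpos : 0 < D := by
      rw [hD]; split
      · norm_num
      · apply div_pos (abs_pos.mpr (by assumption))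
        have := hCnn i
        linarith
    refine ⟨min (min A B) D, by positivity, ?_, ?_, ?_⟩
    · intro h
      calc min (min A B) D ≤ min A B := min_le_left _ _
        _ ≤ A := min_le_left _ _
        _ = x i := by rw [hA, if_pos h]
    · intro h
      calc min (min A B) D ≤ min A B := min_le_left _ _
        _ ≤ B := min_le_right _ _
        _ = 1 - x i := by rw [hB2, if_pos h]
    · intro hE0 z hz
      have hDval : D = |E| / (2 * (C i + 1)) := by rw [hD, if_neg hE0]
      have hdle : min (min A B) D ≤ |E| / (2 * (C i + 1)) := by
        rw [← hDval]; exact min_le_right _ _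
      have hbound : |eval z (qp i) - E| ≤ C i * (|E| / (2 * (C i + 1))) := by
        calc |eval z (qp i) - E| ≤ ∑ j, |(vv i j : ℝ)| * |z j - x j| := hevaldiff i z
          _ ≤ ∑ j, |(vv i j : ℝ)| * (|E| / (2 * (C i + 1))) := by
              apply Finset.sum_le_sum
              intro j _
              exact mul_le_mul_of_nonneg_left (le_trans (hz j) hdle) (abs_nonneg _)
          _ = C i * (|E| / (2 * (C i + 1))) := by rw [hC, ← Finset.sum_mul]
      have hlt : |eval z (qp i) - E| < |E| := by
        have hc := hCnn i
        have hE' : 0 < |E| := abs_pos.mpr hE0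
        have h2 : C i * (|E| / (2 * (C i + 1))) < |E| := by
          rw [div_eq_mul_inv, mul_comm (|E|) _, ← mul_assoc]
          have h3 : C i * (2 * (C i + 1))⁻¹ < 1 := by
            rw [mul_inv_lt_iff₀ (by positivity), one_mul]
            linarith
          calc C i * (2 * (C i + 1))⁻¹ * |E| < 1 * |E| :=
                mul_lt_mul_of_pos_right h3 hE'
            _ = |E| := one_mul _
        exact lt_of_le_of_lt hbound h2
      constructor
      · intro hEpos
        rw [abs_of_pos hEpos] at hlt
        have := (abs_lt.mp hlt).1
        linarith
      · intro hEneg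
        rw [abs_of_neg hEneg] at hlt
        have := (abs_lt.mp hlt).2
        linarith
  choose δf hδf using hmargin
  set δ : ℝ := (Finset.univ : Finset (Option (Fin n))).inf'
      ⟨none, Finset.mem_univ none⟩ (fun o => o.elim 1 δf) with hδ
  have hδpos : 0 < δ := by
    rw [hδ]; apply (Finset.lt_inf'_iff _).mpr
    intro o _
    cases o with
    | none => norm_num
    | some i => exact (hδf i).1
  have hδle : ∀ i, δ ≤ δf i := fun i =>
    Finset.inf'_le _ (Finset.mem_univ (some i))
  -- set up the rational linear system satisfied by (x, 1)
  set ε : ℝ := min (1/4) (δ/4) with hε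
  have hεpos : 0 < ε := lt_min (by norm_num) (by linarith)
  have hε14 : ε ≤ 1/4 := min_le_left _ _
  have hεδ : ε ≤ δ/4 := min_le_right _ _
  set u : Option (Fin n) → ℝ := fun o => o.elim 1 x with hu
  set eQ : Fin n → Option (Fin n) → ℚ :=
    fun i o => o.elim 0 (fun j => if j = i then 1 else 0) with heQ
  set eN : Option (Fin n) → ℚ := fun o => o.elim 1 (fun _ => 0) with heN
  set w : Fin n → Option (Fin n) → ℚ := fun i o => o.elim (cc i) (vv i) with hw
  set r : (Fin n ⊕ Fin n) → Option (Fin n) → ℚ :=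
    Sum.elim (fun i => if x i = 0 then eQ i else if x i = 1 then eQ i - eN else 0)
      (fun i => if eval x (qp i) = 0 then w i else 0) with hr
  -- sums of the rows against real vectors
  have heQsumR : ∀ (i : Fin n) (g : Option (Fin n) → ℝ),
      ∑ o : Option (Fin n), ((eQ i o : ℚ) : ℝ) * g o = g (some i) := by
    intro i g
    rw [Fintype.sum_option]
    simp only [heQ, Option.elim]
    push_cast
    rw [zero_mul, zero_add]
    calc ∑ j, (((if j = i then (1:ℚ) else 0) : ℚ) : ℝ) * g (some j)
        = ∑ j, (if j = i then (1:ℝ) else 0) * g (some j) :=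
          Finset.sum_congr rfl fun j _ => by rw [cast_ite_one]
      _ = g (some i) := sum_ite_one_mul n i _
  have heNsumR : ∀ (g : Option (Fin n) → ℝ),
      ∑ o : Option (Fin n), ((eN o : ℚ) : ℝ) * g o = g none := by
    intro g
    rw [Fintype.sum_option]
    simp only [heN, Option.elim]
    push_cast
    simp
  have hwsumR : ∀ (i : Fin n) (g : Option (Fin n) → ℝ),
      ∑ o : Option (Fin n), ((w i o : ℚ) : ℝ) * g o
        = (cc i : ℝ) * g none + ∑ j, (vv i j : ℝ) * g (some j) := by
    intro i g
    rw [Fintype.sum_option]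
    rfl
  -- (x, 1) solves the system
  have husol : ∀ k, ∑ o : Option (Fin n), ((r k o : ℚ) : ℝ) * u o = 0 := by
    have huSome : ∀ j, u (some j) = x j := fun j => rfl
    have huNone : u none = 1 := rfl
    intro k
    cases k with
    | inl i =>
      rw [hr]
      simp only [Sum.elim_inl]
      by_cases h0 : x i = 0
      · rw [if_pos h0, heQsumR i u, huSome, h0]
      · rw [if_neg h0]
        by_cases h1 : x i = 1
        · rw [if_pos h1]
          have hsplit : ∑ o : Option (Fin n), (((eQ i - eN) o : ℚ) : ℝ) * u o
              = (∑ o : Option (Fin n), ((eQ i o : ℚ) : ℝ) * u o)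
                - ∑ o : Option (Fin n), ((eN o : ℚ) : ℝ) * u o := by
            rw [← Finset.sum_sub_distrib]
            refine Finset.sum_congr rfl fun o _ => ?_
            simp only [Pi.sub_apply]
            push_cast
            ring
          rw [hsplit, heQsumR i u, heNsumR u, huSome, huNone, h1, sub_self]
        · rw [if_neg h1]
          simp
    | inr i =>
      rw [hr]
      simp only [Sum.elim_inr]
      by_cases htight : eval x (qp i) = 0
      · rw [if_pos htight, hwsumR i u]
        have := (heval i x).symm
        rw [htight] at this
        have huNone : u none = 1 := rfl
        rw [huNone, mul_one]
        calc (cc i : ℝ) + ∑ j, (vv i j : ℝ) * u (some j)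
            = (cc i : ℝ) + ∑ j, (vv i j : ℝ) * x j := rfl
          _ = 0 := this
      · rw [if_neg htight]
        simp
  -- get a nearby rational solution
  obtain ⟨q, hqsol, hqclose⟩ := dense_rat_solutions r u husol ε hεpos
  set t : ℚ := q none with htdef
  set y : Fin n → ℚ := fun j => q (some j) with hydef
  have ht_close : |(t : ℝ) - 1| < ε := by
    have := hqclose none
    simpa [htdef, hu] using this
  have hy_close : ∀ j, |(y j : ℝ) - x j| < ε := by
    intro j
    have := hqclose (some j)
    simpa [hydef, hu] using this
  have ht_half : (1:ℝ)/2 ≤ (t : ℝ) := by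
    have h := (abs_lt.mp ht_close).1
    linarith
  have htR_pos : (0:ℝ) < (t : ℝ) := by linarith
  have htR_ne : ((t : ℝ)) ≠ 0 := ne_of_gt htR_pos
  have ht_ne : t ≠ 0 := by
    intro h
    rw [h] at htR_ne
    simp at htR_ne
  -- the candidate point
  set z : Fin n → ℝ := fun j => (y j : ℝ) / (t : ℝ) with hz
  have hz_rat : ∀ j, ∃ qq : ℚ, z j = (qq : ℝ) := by
    intro j
    exact ⟨y j / t, by rw [hz]; push_cast; ring⟩
  -- z is close to x
  have hxabs : ∀ j, |x j| ≤ 1 := by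
    intro j
    rw [abs_le]
    constructor
    · linarith [(hxmem j).1]
    · exact (hxmem j).2
  have hz_close : ∀ j, |z j - x j| ≤ δ := by
    intro j
    have hnum : z j - x j = ((y j : ℝ) - x j + x j * (1 - (t:ℝ))) / (t:ℝ) := by
      rw [hz]
      field_simp
      ring
    have habs_num : |(y j : ℝ) - x j + x j * (1 - (t:ℝ))| ≤ 2 * ε := by
      calc |(y j : ℝ) - x j + x j * (1 - (t:ℝ))|
          ≤ |(y j : ℝ) - x j| + |x j * (1 - (t:ℝ))| := abs_add_le _ _
        _ ≤ ε + |x j| * |1 - (t:ℝ)| := by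
            rw [abs_mul]
            have := hy_close j
            linarith
        _ ≤ ε + 1 * ε := by
            have h1 : |1 - (t:ℝ)| = |(t:ℝ) - 1| := abs_sub_comm _ _
            have h2 : |x j| * |1 - (t:ℝ)| ≤ 1 * ε := by
              rw [h1]
              apply mul_le_mul (hxabs j) (le_of_lt ht_close) (abs_nonneg _) zero_le_one
            linarith
        _ = 2 * ε := by ring
    rw [hnum, abs_div]
    have htabs : |(t:ℝ)| = (t:ℝ) := abs_of_pos htR_pos
    rw [htabs]
    rw [div_le_iff₀ htR_pos]
    calc |(y j : ℝ) - x j + x j * (1 - (t:ℝ))| ≤ 2 * ε := habs_num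
      _ ≤ δ * (1/2) := by
          have : ε ≤ δ/4 := hεδ
          linarith
      _ ≤ δ * (t:ℝ) := by
          apply mul_le_mul_of_nonneg_left ht_half (le_of_lt hδpos)
  have hz_closef : ∀ i j, |z j - x j| ≤ δf i := fun i j =>
    le_trans (hz_close j) (hδle i)
  -- rational-sum versions of the rows
  have heQsumQ : ∀ (i : Fin n) (g : Option (Fin n) → ℚ),
      ∑ o : Option (Fin n), eQ i o * g o = g (some i) := by
    intro i g
    rw [Fintype.sum_option]
    simp only [heQ, Option.elim]
    rw [zero_mul, zero_add]
    exact sum_ite_one_mul n i _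
  have heNsumQ : ∀ (g : Option (Fin n) → ℚ),
      ∑ o : Option (Fin n), eN o * g o = g none := by
    intro g
    rw [Fintype.sum_option]
    simp [heN]
  -- consequences of the constraints for z
  have hz0 : ∀ i, x i = 0 → z i = 0 := by
    intro i h0
    have := hqsol (Sum.inl i)
    rw [hr] at this
    simp only [Sum.elim_inl] at this
    rw [if_pos h0, heQsumQ i q] at this
    simp only [hz]
    rw [show y i = q (some i) from rfl, this]
    simp
  have hz1 : ∀ i, x i ≠ 0 → x i = 1 → z i = 1 := by
    intro i h0 h1
    have := hqsol (Sum.inl i)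
    rw [hr] at this
    simp only [Sum.elim_inl] at this
    rw [if_neg h0, if_pos h1] at this
    have hsplit : ∑ o : Option (Fin n), (eQ i - eN) o * q o
        = (∑ o : Option (Fin n), eQ i o * q o) - ∑ o : Option (Fin n), eN o * q o := by
      rw [← Finset.sum_sub_distrib]
      exact Finset.sum_congr rfl fun o _ => by simp [Pi.sub_apply, sub_mul]
    rw [hsplit, heQsumQ i q, heNsumQ q] at this
    have hyt : y i = t := by
      have : q (some i) - q none = 0 := this
      rw [show y i = q (some i) from rfl, htdef]
      linarith [this]
    simp only [hz]
    rw [hyt]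
    exact div_self htR_ne
  have hztight : ∀ i, eval x (qp i) = 0 → eval z (qp i) = 0 := by
    intro i htight
    have hcon := hqsol (Sum.inr i)
    rw [hr] at hcon
    simp only [Sum.elim_inr] at hcon
    rw [if_pos htight] at hcon
    have hwq : cc i * t + ∑ j, vv i j * y j = 0 := by
      rw [Fintype.sum_option] at hcon
      simpa [hw, htdef, hydef] using hcon
    have hwqR : (cc i : ℝ) * (t:ℝ) + ∑ j, (vv i j : ℝ) * (y j : ℝ) = 0 := by
      have : ((cc i * t + ∑ j, vv i j * y j : ℚ) : ℝ) = 0 := by rw [hwq]; simp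
      push_cast at this
      exact this
    rw [heval i z]
    have hzsum : ∑ j, (vv i j : ℝ) * z j = (∑ j, (vv i j : ℝ) * (y j : ℝ)) / (t:ℝ) := by
      rw [Finset.sum_div]
      exact Finset.sum_congr rfl fun j _ => by simp only [hz]; ring
    rw [hzsum]
    field_simp
    linarith [hwqR]
  -- verify the KKT conditions for z
  refine ⟨z, ⟨?_, ?_⟩, hz_rat⟩
  · -- membership in the box
    intro i
    rcases eq_or_ne (x i) 0 with h0 | h0
    · rw [hz0 i h0]
      constructor <;> norm_num
    rcases eq_or_ne (x i) 1 with h1 | h1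
    · rw [hz1 i h0 h1]
      constructor <;> norm_num
    · -- interior case
      have hx0 : 0 < x i := lt_of_le_of_ne (hxmem i).1 (Ne.symm h0)
      have hx1 : x i < 1 := lt_of_le_of_ne (hxmem i).2 h1
      have hd1 : δf i ≤ x i := (hδf i).2.1 hx0
      have hd2 : δf i ≤ 1 - x i := (hδf i).2.2.1 hx1
      have := hz_closef i i
      rw [abs_le] at this
      constructor
      · linarith [this.1]
      · linarith [this.2]
  · -- the KKT inequalities
    intro i
    rw [← hqp] at *
    rcases eq_or_ne (eval x (qp i)) 0 with htight | htight
    · have hz0' := hztight i htight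
      constructor
      · intro _
        rw [show eval z (pderiv i P) = eval z (qp i) from rfl, hz0']
      · intro _
        rw [show eval z (pderiv i P) = eval z (qp i) from rfl, hz0']
    · -- non-tight case: x i must be 0 or 1, and the gradient keeps its sign
      have hsign := (hδf i).2.2.2 htight z (hz_closef i)
      rcases eq_or_ne (x i) 0 with h0 | h0
      · -- gradient is positive
        have hEpos : 0 < eval x (qp i) := by
          have := (hKKT i).2 (by rw [h0]; norm_num)
          cases lt_or_eq_of_le this with
          | inl h => exact h
          | inr h => exact absurd h.symm htight
        have hzpos := hsign.1 hEpos
        constructor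
        · intro hzi
          rw [hz0 i h0] at hzi
          exact absurd hzi (lt_irrefl 0)
        · intro _
          exact le_of_lt hzpos
      rcases eq_or_ne (x i) 1 with h1 | h1
      · -- gradient is negative
        have hEneg : eval x (qp i) < 0 := by
          have := (hKKT i).1 (by rw [h1]; norm_num)
          cases lt_or_eq_of_le this with
          | inl h => exact h
          | inr h => exact absurd h htight
        have hzneg := hsign.2 hEneg
        constructor
        · intro _
          exact le_of_lt hzneg
        · intro hzi
          rw [hz1 i h0 h1] at hzi
          exact absurd hzi (lt_irrefl 1)
      · -- interior: gradient must vanish, contradiction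
        exfalso
        have hx0 : 0 < x i := lt_of_le_of_ne (hxmem i).1 (Ne.symm h0)
        have hx1 : x i < 1 := lt_of_le_of_ne (hxmem i).2 h1
        exact htight (le_antisymm ((hKKT i).1 hx0) ((hKKT i).2 hx1))
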